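/- The number of 312-avoiding permutations of [n] equals the n-th Catalan number C_n = (1/(n+1)) * binomial(2n, n). -/

import Mathlib

/-- A permutation `π` of `[n]` is 312-avoiding if there are no indices `a < b < c`
with `π a > π b`, `π b < π c`, and `π a > π c`. -/
def Avoids312 (n : ℕ) (π : Equiv.Perm (Fin n)) : Prop :=
  ¬ ∃ a b c : Fin n, a < b ∧ b < c ∧ π b < π a ∧ π b < π c ∧ π c < π a

open Equiv

namespace Avoid312Aux

variable {n : ℕ}

def glueFun (b : Fin (n+1)) (σ : Perm (Fin b.val)) (τ : Perm (Fin (n - b.val)))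
    (a : Fin (n+1)) : Fin (n+1) :=
  if h : a.val < b.val then ⟨(σ ⟨a.val, h⟩).val + 1, by have := (σ ⟨a.val, h⟩).2; have := b.isLt; omega⟩
  else if h2 : a.val = b.val then 0
  else ⟨b.val + 1 + (τ ⟨a.val - b.val - 1, by have := a.isLt; have := b.isLt; omega⟩).val, by
    have := (τ ⟨a.val - b.val - 1, by have := a.isLt; have := b.isLt; omega⟩).2
    have := b.isLt; omega⟩

def glueInv (b : Fin (n+1)) (σ : Perm (Fin b.val)) (τ : Perm (Fin (n - b.val)))
    (v : Fin (n+1)) : Fin (n+1) :=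
  if h : v.val = 0 then b
  else if h2 : v.val ≤ b.val then ⟨(σ.symm ⟨v.val - 1, by omega⟩).val, by
      have := (σ.symm ⟨v.val - 1, by omega⟩).2; have := b.isLt; omega⟩
  else ⟨b.val + 1 + (τ.symm ⟨v.val - b.val - 1, by have := v.isLt; omega⟩).val, by
    have := (τ.symm ⟨v.val - b.val - 1, by have := v.isLt; omega⟩).2; have := b.isLt; omega⟩

variable {b : Fin (n+1)} {σ : Perm (Fin b.val)} {τ : Perm (Fin (n - b.val))}

theorem glueFun_lt {a : Fin (n+1)} (h : a.val < b.val) :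
    (glueFun b σ τ a).val = (σ ⟨a.val, h⟩).val + 1 := by
  unfold glueFun; rw [dif_pos h]

theorem glueFun_eq {a : Fin (n+1)} (h : a.val = b.val) : glueFun b σ τ a = 0 := by
  unfold glueFun; rw [dif_neg (by omega), dif_pos h]

theorem glueFun_gt {a : Fin (n+1)} (h : b.val < a.val) :
    (glueFun b σ τ a).val
      = b.val + 1 + (τ ⟨a.val - b.val - 1, by have := a.isLt; omega⟩).val := by
  unfold glueFun; rw [dif_neg (by omega), dif_neg (by omega)]

theorem glueInv_zero {v : Fin (n+1)} (h : v.val = 0) : glueInv b σ τ v = b := by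
  unfold glueInv; rw [dif_pos h]

theorem glueInv_le {v : Fin (n+1)} (h1 : v.val ≠ 0) (h2 : v.val ≤ b.val) :
    (glueInv b σ τ v).val = (σ.symm ⟨v.val - 1, by omega⟩).val := by
  unfold glueInv; rw [dif_neg h1, dif_pos h2]

theorem glueInv_gt {v : Fin (n+1)} (h : b.val < v.val) :
    (glueInv b σ τ v).val
      = b.val + 1 + (τ.symm ⟨v.val - b.val - 1, by have := v.isLt; omega⟩).val := by
  unfold glueInv; rw [dif_neg (by omega), dif_neg (by omega)]

def glue (b : Fin (n+1)) (σ : Perm (Fin b.val)) (τ : Perm (Fin (n - b.val))) :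
    Perm (Fin (n+1)) where
  toFun := glueFun b σ τ
  invFun := glueInv b σ τ
  left_inv := by
    intro a
    rcases lt_trichotomy a.val b.val with h | h | h
    · have hσ := (σ ⟨a.val, h⟩).2
      apply Fin.ext
      rw [glueInv_le (v := glueFun b σ τ a) (by rw [glueFun_lt h]; omega)
        (by rw [glueFun_lt h]; omega)]
      have harg : (⟨(glueFun b σ τ a).val - 1, by rw [glueFun_lt h]; omega⟩ : Fin b.val)
          = σ ⟨a.val, h⟩ := by
        apply Fin.ext; simp [glueFun_lt h]
      rw [harg, Equiv.symm_apply_apply]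
    · rw [glueInv_zero (by rw [glueFun_eq h]; rfl)]
      exact Fin.ext h.symm
    · have hτ := (τ ⟨a.val - b.val - 1, by have := a.isLt; omega⟩).2
      apply Fin.ext
      rw [glueInv_gt (v := glueFun b σ τ a) (by rw [glueFun_gt h]; omega)]
      have harg : (⟨(glueFun b σ τ a).val - b.val - 1, by have := (glueFun b σ τ a).isLt; omega⟩ :
          Fin (n - b.val)) = τ ⟨a.val - b.val - 1, by have := a.isLt; omega⟩ := by
        apply Fin.ext; simp [glueFun_gt h]; omega
      rw [harg, Equiv.symm_apply_apply]
      have := a.isLt; simp; omega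
  right_inv := by
    intro v
    rcases Nat.eq_zero_or_pos v.val with h0 | h0
    · rw [glueInv_zero h0]
      rw [glueFun_eq rfl]
      exact (Fin.ext h0).symm
    · by_cases hle : v.val ≤ b.val
      · have hσ := (σ.symm ⟨v.val - 1, by omega⟩).2
        apply Fin.ext
        rw [glueFun_lt (a := glueInv b σ τ v) (by rw [glueInv_le (by omega) hle]; omega)]
        have harg : (⟨(glueInv b σ τ v).val, by rw [glueInv_le (by omega) hle]; omega⟩ :
            Fin b.val) = σ.symm ⟨v.val - 1, by omega⟩ := by
          apply Fin.ext; simp [glueInv_le (by omega : v.val ≠ 0) hle]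
        rw [harg, Equiv.apply_symm_apply]
        simp; omega
      · have hτ := (τ.symm ⟨v.val - b.val - 1, by have := v.isLt; omega⟩).2
        apply Fin.ext
        rw [glueFun_gt (a := glueInv b σ τ v) (by rw [glueInv_gt (by omega)]; omega)]
        have harg : (⟨(glueInv b σ τ v).val - b.val - 1, by
            have := (glueInv b σ τ v).isLt; omega⟩ : Fin (n - b.val)) =
            τ.symm ⟨v.val - b.val - 1, by have := v.isLt; omega⟩ := by
          apply Fin.ext; simp [glueInv_gt (by omega : b.val < v.val)]; omega
        rw [harg, Equiv.apply_symm_apply]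
        simp; omega


theorem glue_lt {a : Fin (n+1)} (h : a.val < b.val) :
    ((glue b σ τ) a).val = (σ ⟨a.val, h⟩).val + 1 := glueFun_lt h

theorem glue_eq {a : Fin (n+1)} (h : a.val = b.val) : (glue b σ τ) a = 0 := glueFun_eq h

theorem glue_gt {a : Fin (n+1)} (h : b.val < a.val) :
    ((glue b σ τ) a).val
      = b.val + 1 + (τ ⟨a.val - b.val - 1, by have := a.isLt; omega⟩).val := glueFun_gt h

theorem glue_avoids (hσ : Avoids312 b.val σ) (hτ : Avoids312 (n - b.val) τ) :
    Avoids312 (n+1) (glue b σ τ) := by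
  rintro ⟨x, y, z, hxy, hyz, h1, h2, h3⟩
  rw [Fin.lt_def] at hxy hyz h1 h2 h3
  rcases lt_trichotomy z.val b.val with hz | hz | hz
  · have hy : y.val < b.val := by omega
    have hx : x.val < b.val := by omega
    rw [glue_lt hx, glue_lt hy] at h1
    rw [glue_lt hy, glue_lt hz] at h2
    rw [glue_lt hz, glue_lt hx] at h3
    exact hσ ⟨⟨x.val, hx⟩, ⟨y.val, hy⟩, ⟨z.val, hz⟩, by rw [Fin.lt_def]; exact hxy,
      by rw [Fin.lt_def]; exact hyz, by rw [Fin.lt_def]; omega,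
      by rw [Fin.lt_def]; omega, by rw [Fin.lt_def]; omega⟩
  · rw [glue_eq hz] at h2
    simp at h2
  · rcases lt_trichotomy x.val b.val with hx | hx | hx
    · have hs := (σ ⟨x.val, hx⟩).2
      rw [glue_lt hx] at h3
      rw [glue_gt hz] at h3
      omega
    · rw [glue_eq hx] at h1
      simp at h1
    · have hy : b.val < y.val := by omega
      rw [glue_gt hx, glue_gt hy] at h1
      rw [glue_gt hy, glue_gt hz] at h2
      rw [glue_gt hz, glue_gt hx] at h3
      refine hτ ⟨⟨x.val - b.val - 1, by have := x.isLt; omega⟩,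
        ⟨y.val - b.val - 1, by have := y.isLt; omega⟩,
        ⟨z.val - b.val - 1, by have := z.isLt; omega⟩,
        by rw [Fin.lt_def]; simp; omega, by rw [Fin.lt_def]; simp; omega,
        by rw [Fin.lt_def]; omega, by rw [Fin.lt_def]; omega, by rw [Fin.lt_def]; omega⟩

theorem glue_inj {σ' : Perm (Fin b.val)} {τ' : Perm (Fin (n - b.val))}
    (h : glue b σ τ = glue b σ' τ') : σ = σ' ∧ τ = τ' := by
  constructor
  · ext x
    have hx : (⟨x.val, Nat.lt_trans x.2 b.isLt⟩ : Fin (n+1)).val < b.val := x.2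
    have := congrArg (fun e : Perm (Fin (n+1)) => (e ⟨x.val, Nat.lt_trans x.2 b.isLt⟩).val) h
    rw [glue_lt hx, glue_lt hx] at this
    have hfix : (⟨(⟨x.val, Nat.lt_trans x.2 b.isLt⟩ : Fin (n+1)).val, hx⟩ : Fin b.val) = x :=
      Fin.ext rfl
    rw [hfix] at this
    omega
  · ext c
    have hbn := b.isLt
    have hcc := c.2
    set a : Fin (n+1) := ⟨b.val + 1 + c.val, by omega⟩ with hadef
    have ha : b.val < a.val := by simp [hadef]; omega
    have := congrArg (fun e : Perm (Fin (n+1)) => (e a).val) h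
    rw [glue_gt ha, glue_gt ha] at this
    have hfix : (⟨a.val - b.val - 1, by have := a.isLt; omega⟩ : Fin (n - b.val)) = c := by
      apply Fin.ext; simp [hadef]; omega
    rw [hfix] at this
    omega

section Decompose

variable {π : Perm (Fin (n+1))} (hav : Avoids312 (n+1) π) {b : Fin (n+1)} (hb : π b = 0)

include hav hb

theorem left_le (a : Fin (n+1)) (ha : a.val < b.val) : (π a).val ≤ b.val := by
  by_contra hgt
  push_neg at hgt
  have hex : ∃ c : Fin (n+1), b.val < c.val ∧ (π c).val ≤ b.val := by
    by_contra h2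
    push_neg at h2
    set S : Finset (Fin (n+1)) := Finset.univ.filter (fun c => b.val < c.val) with hS
    have himg : S.image π ⊆ S := by
      intro v hv
      simp only [hS, Finset.mem_image, Finset.mem_filter, Finset.mem_univ, true_and] at hv ⊢
      obtain ⟨c, hc, rfl⟩ := hv
      exact h2 c hc
    have hcard : S.card ≤ (S.image π).card := by
      rw [Finset.card_image_of_injective _ π.injective]
    have heq : S.image π = S := Finset.eq_of_subset_of_card_le himg hcard
    have hmem : π a ∈ S := by
      simp only [hS, Finset.mem_filter, Finset.mem_univ, true_and]; exact hgt
    rw [← heq] at hmem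
    simp only [Finset.mem_image] at hmem
    obtain ⟨c, hc, hca⟩ := hmem
    have : c = a := π.injective hca
    subst this
    simp only [hS, Finset.mem_filter, Finset.mem_univ, true_and] at hc
    omega
  obtain ⟨c, hc1, hc2⟩ := hex
  have hcb : c ≠ b := by intro h; rw [h] at hc1; omega
  have hπc : (π c).val ≠ 0 := by
    intro h
    have : π c = π b := by rw [hb]; exact Fin.ext h
    exact hcb (π.injective this)
  exact hav ⟨a, b, c, by rw [Fin.lt_def]; exact ha, by rw [Fin.lt_def]; exact hc1,
    by rw [Fin.lt_def, hb]; simp only [show ((0 : Fin (n+1)) : ℕ) = 0 from rfl]; omega, by rw [Fin.lt_def, hb]; simp only [show ((0 : Fin (n+1)) : ℕ) = 0 from rfl]; omega,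
    by rw [Fin.lt_def]; omega⟩

theorem right_gt (c : Fin (n+1)) (hc : b.val < c.val) : b.val < (π c).val := by
  by_contra hle
  push_neg at hle
  set S : Finset (Fin (n+1)) := Finset.univ.filter (fun a => a.val ≤ b.val) with hS
  have himg : S.image π ⊆ S := by
    intro v hv
    simp only [hS, Finset.mem_image, Finset.mem_filter, Finset.mem_univ, true_and] at hv ⊢
    obtain ⟨a, ha, rfl⟩ := hv
    rcases lt_or_eq_of_le ha with h | h
    · exact left_le hav hb a h
    · rw [Fin.ext h]
      rw [hb]
      simp
  have hcard : S.card ≤ (S.image π).card := by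
    rw [Finset.card_image_of_injective _ π.injective]
  have heq : S.image π = S := Finset.eq_of_subset_of_card_le himg hcard
  have hmem : π c ∈ S := by
    simp only [hS, Finset.mem_filter, Finset.mem_univ, true_and]; exact hle
  rw [← heq] at hmem
  simp only [Finset.mem_image] at hmem
  obtain ⟨a, ha, hac⟩ := hmem
  have : a = c := π.injective hac
  subst this
  simp only [hS, Finset.mem_filter, Finset.mem_univ, true_and] at ha
  omega

omit hav in
theorem left_pos (a : Fin (n+1)) (ha : a.val < b.val) : 0 < (π a).val := by
  rcases Nat.eq_zero_or_pos (π a).val with h | h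
  · exfalso
    have : π a = π b := by rw [hb]; exact Fin.ext h
    have := π.injective this
    subst this
    omega
  · exact h

theorem glue_surj : ∃ (σ : Perm (Fin b.val)) (τ : Perm (Fin (n - b.val))),
    Avoids312 b.val σ ∧ Avoids312 (n - b.val) τ ∧ glue b σ τ = π := by
  classical
  have hbn := b.isLt
  -- the left part
  have hσf : ∀ x : Fin b.val, (π ⟨x.val, Nat.lt_trans x.2 hbn⟩).val - 1 < b.val := by
    intro x
    have h1 := left_le hav hb ⟨x.val, Nat.lt_trans x.2 hbn⟩ x.2
    have h2 := left_pos hb ⟨x.val, Nat.lt_trans x.2 hbn⟩ x.2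
    omega
  have hσinj : Function.Injective
      (fun x : Fin b.val => (⟨(π ⟨x.val, Nat.lt_trans x.2 hbn⟩).val - 1, hσf x⟩ : Fin b.val)) := by
    intro x y hxy
    have h2x := left_pos hb ⟨x.val, Nat.lt_trans x.2 hbn⟩ x.2
    have h2y := left_pos hb ⟨y.val, Nat.lt_trans y.2 hbn⟩ y.2
    simp only [Fin.mk.injEq] at hxy
    have : (π ⟨x.val, Nat.lt_trans x.2 hbn⟩).val = (π ⟨y.val, Nat.lt_trans y.2 hbn⟩).val := by
      omega
    have := π.injective (Fin.ext this)
    simp only [Fin.mk.injEq] at this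
    exact Fin.ext this
  let σ : Perm (Fin b.val) := Equiv.ofBijective _ ((Finite.injective_iff_bijective).mp hσinj)
  -- the right part
  have hτpos : ∀ c : Fin (n - b.val), b.val + 1 + c.val < n + 1 := by
    intro c; have := c.2; omega
  have hτf : ∀ c : Fin (n - b.val), (π ⟨b.val + 1 + c.val, hτpos c⟩).val - b.val - 1
      < n - b.val := by
    intro c
    have := (π ⟨b.val + 1 + c.val, hτpos c⟩).isLt
    have := right_gt hav hb ⟨b.val + 1 + c.val, hτpos c⟩ (by simp; omega)
    omega
  have hτinj : Function.Injective
      (fun c : Fin (n - b.val) =>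
        (⟨(π ⟨b.val + 1 + c.val, hτpos c⟩).val - b.val - 1, hτf c⟩ : Fin (n - b.val))) := by
    intro x y hxy
    have h2x := right_gt hav hb ⟨b.val + 1 + x.val, hτpos x⟩ (by simp; omega)
    have h2y := right_gt hav hb ⟨b.val + 1 + y.val, hτpos y⟩ (by simp; omega)
    simp only [Fin.mk.injEq] at hxy
    have : (π ⟨b.val + 1 + x.val, hτpos x⟩).val = (π ⟨b.val + 1 + y.val, hτpos y⟩).val := by
      omega
    have := π.injective (Fin.ext this)
    simp only [Fin.mk.injEq] at this
    exact Fin.ext (by omega)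
  let τ : Perm (Fin (n - b.val)) := Equiv.ofBijective _ ((Finite.injective_iff_bijective).mp hτinj)
  have hσval : ∀ x : Fin b.val, (σ x).val = (π ⟨x.val, Nat.lt_trans x.2 hbn⟩).val - 1 := by
    intro x; rfl
  have hτval : ∀ c : Fin (n - b.val),
      (τ c).val = (π ⟨b.val + 1 + c.val, hτpos c⟩).val - b.val - 1 := by
    intro c; rfl
  refine ⟨σ, τ, ?_, ?_, ?_⟩
  · rintro ⟨x, y, z, hxy, hyz, h1, h2, h3⟩
    rw [Fin.lt_def] at hxy hyz h1 h2 h3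
    rw [hσval, hσval] at h1 h2 h3
    have px := left_pos hb ⟨x.val, Nat.lt_trans x.2 hbn⟩ x.2
    have py := left_pos hb ⟨y.val, Nat.lt_trans y.2 hbn⟩ y.2
    have pz := left_pos hb ⟨z.val, Nat.lt_trans z.2 hbn⟩ z.2
    exact hav ⟨⟨x.val, Nat.lt_trans x.2 hbn⟩, ⟨y.val, Nat.lt_trans y.2 hbn⟩,
      ⟨z.val, Nat.lt_trans z.2 hbn⟩, by rw [Fin.lt_def]; exact hxy,
      by rw [Fin.lt_def]; exact hyz, by rw [Fin.lt_def]; omega,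
      by rw [Fin.lt_def]; omega, by rw [Fin.lt_def]; omega⟩
  · rintro ⟨x, y, z, hxy, hyz, h1, h2, h3⟩
    rw [Fin.lt_def] at hxy hyz h1 h2 h3
    rw [hτval, hτval] at h1 h2 h3
    have px := right_gt hav hb ⟨b.val + 1 + x.val, hτpos x⟩ (by simp; omega)
    have py := right_gt hav hb ⟨b.val + 1 + y.val, hτpos y⟩ (by simp; omega)
    have pz := right_gt hav hb ⟨b.val + 1 + z.val, hτpos z⟩ (by simp; omega)
    exact hav ⟨⟨b.val + 1 + x.val, hτpos x⟩, ⟨b.val + 1 + y.val, hτpos y⟩,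
      ⟨b.val + 1 + z.val, hτpos z⟩, by rw [Fin.lt_def]; simp; omega,
      by rw [Fin.lt_def]; simp; omega, by rw [Fin.lt_def]; omega,
      by rw [Fin.lt_def]; omega, by rw [Fin.lt_def]; omega⟩
  · apply Equiv.ext
    intro a
    apply Fin.ext
    rcases lt_trichotomy a.val b.val with h | h | h
    · rw [glue_lt h]
      have hfix : (⟨a.val, h⟩ : Fin b.val) = ⟨a.val, h⟩ := rfl
      rw [hσval ⟨a.val, h⟩]
      have hpa : (⟨(⟨a.val, h⟩ : Fin b.val).val, Nat.lt_trans (⟨a.val, h⟩ : Fin b.val).2 hbn⟩ :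
          Fin (n+1)) = a := Fin.ext rfl
      rw [hpa]
      have := left_pos hb a h
      omega
    · rw [glue_eq h]
      have : a = b := Fin.ext h
      rw [this, hb]
    · rw [glue_gt h]
      set c : Fin (n - b.val) := ⟨a.val - b.val - 1, by have := a.isLt; omega⟩ with hc
      rw [hτval c]
      have hpa : (⟨b.val + 1 + c.val, hτpos c⟩ : Fin (n+1)) = a := by
        apply Fin.ext; simp [hc]; omega
      rw [hpa]
      have := right_gt hav hb a h
      omega

end Decompose


noncomputable def A (n : ℕ) : ℕ := Nat.card {π : Perm (Fin n) // Avoids312 n π}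

theorem A_zero : A 0 = 1 := by
  have hall : ∀ π : Perm (Fin 0), Avoids312 0 π := fun π h => by
    obtain ⟨a, _⟩ := h; exact a.elim0
  rw [A, Nat.card_congr (Equiv.subtypeUnivEquiv hall)]
  simp [Nat.card_eq_fintype_card]

theorem A_succ (n : ℕ) : A (n+1) = ∑ b : Fin (n+1), A b.val * A (n - b.val) := by
  classical
  rw [A, ← Nat.card_congr (Equiv.sigmaFiberEquiv
    (fun p : {π : Perm (Fin (n+1)) // Avoids312 (n+1) π} => p.1.symm 0))]
  rw [Nat.card_eq_fintype_card, Fintype.card_sigma]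
  apply Finset.sum_congr rfl
  intro b _
  rw [A, A, ← Nat.card_prod, ← Nat.card_eq_fintype_card]
  symm
  apply Nat.card_eq_of_bijective
    (fun st : {σ : Perm (Fin b.val) // Avoids312 b.val σ} ×
        {τ : Perm (Fin (n - b.val)) // Avoids312 (n - b.val) τ} =>
      (⟨⟨glue b st.1.1 st.2.1, glue_avoids st.1.2 st.2.2⟩, by
        rw [Equiv.symm_apply_eq]; exact (glue_eq rfl).symm⟩ :
        {p : {π : Perm (Fin (n+1)) // Avoids312 (n+1) π} // p.1.symm 0 = b}))
  constructor
  · intro x y hxy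
    have : glue b x.1.1 x.2.1 = glue b y.1.1 y.2.1 := congrArg (fun p => p.1.1) hxy
    obtain ⟨h1, h2⟩ := glue_inj this
    exact Prod.ext (Subtype.ext h1) (Subtype.ext h2)
  · rintro ⟨⟨π, hav⟩, hsym⟩
    have hb : π b = 0 := by
      simp only at hsym
      rw [← hsym, Equiv.apply_symm_apply]
    obtain ⟨σ, τ, hσ, hτ, hglue⟩ := glue_surj hav hb
    exact ⟨⟨⟨σ, hσ⟩, ⟨τ, hτ⟩⟩, by apply Subtype.ext; apply Subtype.ext; exact hglue⟩

theorem A_catalan : ∀ n, A n = catalan n := by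
  intro n
  induction n using Nat.strong_induction_on with
  | _ n ih =>
    match n with
    | 0 => rw [A_zero, catalan_zero]
    | Nat.succ m =>
      rw [A_succ, catalan_succ]
      apply Finset.sum_congr rfl
      intro b _
      rw [ih b.val b.2, ih (m - b.val) (Nat.lt_succ_of_le (Nat.sub_le m b.val))]

end Avoid312Aux

/-- The number of 312-avoiding permutations of `[n]` equals the `n`-th Catalan number
`C_n = (1/(n+1)) * binomial(2n, n)`. -/
theorem stmt0 (n : ℕ) :
    Nat.card {π : Equiv.Perm (Fin n) // Avoids312 n π} = (2 * n).choose n / (n + 1) := by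
  have h := Avoid312Aux.A_catalan n
  rw [Avoid312Aux.A] at h
  rw [h, catalan_eq_centralBinom_div]
  rfl
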